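/- Fix a finite group L, an integer t ≥ 2, θ ∈ Aut(L) and ℓ ∈ L. Assume there exists x ∈ L such that θ(ℓ x ℓ^{-1}) = x, and set k = ord(x). If gcd(k, t) ≠ 1, k ∉ {2, 4} when t = 2, and k > 2 when t = 4, then the twisted homogeneous rack C_ℓ is of type D. -/

import Mathlib

/-- A nonempty subset of `X` closed under the operation `op` (a subrack). -/
def IsSubrackOf {X : Type*} (op : X → X → X) (Y : Set X) : Prop :=
  Y.Nonempty ∧ ∀ a ∈ Y, ∀ b ∈ Y, op a b ∈ Y

/-- The rack with underlying set `C ⊆ X` and operation `op` is of type D: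
there is a decomposable subrack `R ⊔ S` of `C` and `r ∈ R`, `s ∈ S` with
`r ▹ (s ▹ (r ▹ s)) ≠ s`. -/
def IsTypeDOn {X : Type*} (op : X → X → X) (C : Set X) : Prop :=
  ∃ R S : Set X, R ⊆ C ∧ S ⊆ C ∧ IsSubrackOf op R ∧ IsSubrackOf op S ∧
    Disjoint R S ∧
    (∀ r ∈ R, ∀ s ∈ S, op r s ∈ S) ∧ (∀ s ∈ S, ∀ r ∈ R, op s r ∈ R) ∧
    ∃ r ∈ R, ∃ s ∈ S, op r (op s (op r s)) ≠ s

/-- The automorphism `u` of `L^t`: `u(ℓ₁, …, ℓ_t) = (θ(ℓ_t), ℓ₁, …, ℓ_{t-1})`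
(indices `0, …, t-1`, so coordinate `0` is `ℓ₁` and coordinate `t-1` is `ℓ_t`). -/
def thrU {L : Type*} [Group L] (θ : L ≃* L) (t : ℕ) (x : Fin t → L) : Fin t → L :=
  fun i => if (i : ℕ) = 0 then θ (x ⟨t - 1, by have := i.2; omega⟩)
    else x ⟨(i : ℕ) - 1, by have := i.2; omega⟩

/-- The rack operation `y ▹ z = y · u(z · y⁻¹)` on `L^t`. -/
def thrOp {L : Type*} [Group L] (θ : L ≃* L) (t : ℕ) (y z : Fin t → L) : Fin t → L :=
  y * thrU θ t (z * y⁻¹)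

/-- The element `(e, …, e, ℓ)` of `L^t`. -/
def thrBase {L : Type*} [Group L] (t : ℕ) (ℓ : L) : Fin t → L :=
  fun i => if (i : ℕ) = t - 1 then ℓ else 1

/-- The twisted conjugacy class (twisted homogeneous rack) of `x ∈ L^t`
with respect to `u`, i.e. the orbit of `x` under `g ⇀ x = g · x · u(g)⁻¹`. -/
def thrClassOf {L : Type*} [Group L] (θ : L ≃* L) (t : ℕ) (x : Fin t → L) :
    Set (Fin t → L) :=
  {y | ∃ g : Fin t → L, g * x * (thrU θ t g)⁻¹ = y}

/-- The twisted homogeneous rack `C_ℓ = C_{(e,…,e,ℓ)}` of class `(L, t, θ)`. -/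
def thrClass {L : Type*} [Group L] (θ : L ≃* L) (t : ℕ) (ℓ : L) : Set (Fin t → L) :=
  thrClassOf θ t (thrBase t ℓ)

/-- The twisted conjugacy class `O^{L,θ}_ℓ = {a·ℓ·θ(a)⁻¹ : a ∈ L}`. -/
def twConjClass {L : Type*} [Group L] (θ : L ≃* L) (ℓ : L) : Set L :=
  {k | ∃ a : L, a * ℓ * (θ a)⁻¹ = k}

namespace ThrAux

/-- cyclic predecessor on `Fin t` -/
def cpred {t : ℕ} (i : Fin t) : Fin t := ⟨((i : ℕ) + (t - 1)) % t, Nat.mod_lt _ i.pos⟩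
/-- cyclic successor on `Fin t` -/
def csucc {t : ℕ} (i : Fin t) : Fin t := ⟨((i : ℕ) + 1) % t, Nat.mod_lt _ i.pos⟩

lemma cpred_coe {t : ℕ} (i : Fin t) :
    ((cpred i : ℕ)) = if (i : ℕ) = 0 then t - 1 else (i : ℕ) - 1 := by
  have h2 := i.2
  unfold cpred
  by_cases h : (i : ℕ) = 0
  · simp [h, Nat.mod_eq_of_lt (show t - 1 < t by omega)]
  · have he : (i : ℕ) + (t - 1) = t + ((i : ℕ) - 1) := by omega
    simp only [he, if_neg h, Nat.add_mod_left, Nat.mod_eq_of_lt (show (i:ℕ) - 1 < t by omega)]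

lemma csucc_coe {t : ℕ} (i : Fin t) :
    ((csucc i : ℕ)) = if (i : ℕ) = t - 1 then 0 else (i : ℕ) + 1 := by
  have h2 := i.2
  unfold csucc
  by_cases h : (i : ℕ) = t - 1
  · simp [h, show t - 1 + 1 = t by omega]
  · simp only [if_neg h, Nat.mod_eq_of_lt (show (i:ℕ) + 1 < t by omega)]

/-- cyclic shift as an equivalence -/
def ce (t : ℕ) : Fin t ≃ Fin t where
  toFun := cpred
  invFun := csucc
  left_inv i := by
    have h2 := i.2
    apply Fin.ext
    rw [csucc_coe, cpred_coe]
    split_ifs <;> first | omega | exact ‹False›.elim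
  right_inv i := by
    have h2 := i.2
    apply Fin.ext
    rw [cpred_coe, csucc_coe]
    split_ifs <;> first | omega | exact ‹False›.elim

/-- the affine rack operation on exponent vectors -/
def opE {t : ℕ} (m n : Fin t → ℤ) : Fin t → ℤ :=
  fun i => m i + (n (cpred i) - m (cpred i))

lemma sum_opE {t : ℕ} (m n : Fin t → ℤ) : ∑ i, opE m n i = ∑ i, n i := by
  unfold opE
  rw [Finset.sum_add_distrib, Finset.sum_sub_distrib]
  rw [show ∑ i, n (cpred i) = ∑ i, n i from Equiv.sum_comp (ce t) n]
  rw [show ∑ i, m (cpred i) = ∑ i, m i from Equiv.sum_comp (ce t) m]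
  ring

/-- the invariant functional -/
def ff (p t : ℕ) (m : Fin t → ℤ) : ZMod p :=
  ∑ i : Fin t, ((i : ℕ) : ZMod p) * ((m i : ℤ) : ZMod p)

lemma ff_zero (p t : ℕ) : ff p t 0 = 0 := by simp [ff]

lemma cast_mod_t (p t a : ℕ) (hpt : p ∣ t) : (((a % t : ℕ)) : ZMod p) = (a : ZMod p) := by
  have htz : ((t : ℕ) : ZMod p) = 0 := by
    obtain ⟨d, rfl⟩ := hpt
    push_cast
    simp [ZMod.natCast_self]
  conv_rhs => rw [← Nat.div_add_mod a t]
  push_cast [htz]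
  ring

lemma ff_shift {p t k : ℕ} (hpt : p ∣ t) (hpk : p ∣ k) (v : Fin t → ℤ)
    (hv : (k : ℤ) ∣ ∑ i, v i) :
    ∑ i : Fin t, ((i : ℕ) : ZMod p) * ((v (cpred i) : ℤ) : ZMod p) = ff p t v := by
  rw [← Equiv.sum_comp (ce t).symm
    (fun i : Fin t => ((i : ℕ) : ZMod p) * ((v (cpred i) : ℤ) : ZMod p))]
  have hstep : ∀ j : Fin t,
      ((((ce t).symm j : Fin t) : ℕ) : ZMod p) * ((v (cpred ((ce t).symm j)) : ℤ) : ZMod p)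
      = (((j : ℕ) : ZMod p) + 1) * ((v j : ℤ) : ZMod p) := by
    intro j
    have h1 : cpred ((ce t).symm j) = j := (ce t).apply_symm_apply j
    have h2 : (((ce t).symm j : Fin t) : ℕ) = ((j : ℕ) + 1) % t := rfl
    rw [h1, h2, cast_mod_t p t _ hpt]
    push_cast
    ring
  rw [Finset.sum_congr rfl (fun j _ => hstep j)]
  have hsplit : ∀ j : Fin t, (((j : ℕ) : ZMod p) + 1) * ((v j : ℤ) : ZMod p)
      = ((j : ℕ) : ZMod p) * ((v j : ℤ) : ZMod p) + ((v j : ℤ) : ZMod p) := fun j => by ring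
  rw [Finset.sum_congr rfl (fun j _ => hsplit j), Finset.sum_add_distrib]
  have hz : ∑ j : Fin t, ((v j : ℤ) : ZMod p) = 0 := by
    have hc : ((∑ i, v i : ℤ) : ZMod p) = 0 := by
      obtain ⟨d, hd⟩ := hv
      rw [hd]
      obtain ⟨e, rfl⟩ := hpk
      push_cast
      simp [ZMod.natCast_self]
    rw [← hc]
    push_cast
    ring
  rw [hz, add_zero]
  rfl

lemma ff_opE {p t k : ℕ} (hpt : p ∣ t) (hpk : p ∣ k) (m n : Fin t → ℤ)
    (hm : (k : ℤ) ∣ ∑ i, m i) (hn : (k : ℤ) ∣ ∑ i, n i) :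
    ff p t (opE m n) = ff p t n := by
  have hterm : ∀ i : Fin t, ((i : ℕ) : ZMod p) * (((opE m n i : ℤ)) : ZMod p)
      = ((i : ℕ) : ZMod p) * ((m i : ℤ) : ZMod p)
        + (((i : ℕ) : ZMod p) * ((n (cpred i) : ℤ) : ZMod p)
          - ((i : ℕ) : ZMod p) * ((m (cpred i) : ℤ) : ZMod p)) := by
    intro i
    unfold opE
    push_cast
    ring
  unfold ff
  rw [Finset.sum_congr rfl (fun i _ => hterm i), Finset.sum_add_distrib,
    Finset.sum_sub_distrib, ff_shift hpt hpk n hn, ff_shift hpt hpk m hm]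
  unfold ff
  ring

lemma ff_congr {p t k : ℕ} (hpk : p ∣ k) (m n : Fin t → ℤ)
    (h : ∀ i, (k : ℤ) ∣ m i - n i) : ff p t m = ff p t n := by
  unfold ff
  apply Finset.sum_congr rfl
  intro i _
  congr 1
  rw [ZMod.intCast_eq_intCast_iff]
  have hpz : (p : ℤ) ∣ m i - n i := dvd_trans (Int.natCast_dvd_natCast.2 hpk) (h i)
  apply Int.modEq_iff_dvd.2
  rw [show n i - m i = -(m i - n i) from by ring]
  exact dvd_neg.mpr hpz

lemma sum_pair_ite {α M : Type*} [Fintype α] [DecidableEq α] [AddCommGroup M]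
    (a b : α) (hab : a ≠ b) (u v : M) :
    ∑ j : α, (if j = a then u else if j = b then v else 0) = u + v := by
  have h : ∀ j : α, (if j = a then u else if j = b then v else 0)
      = (if j = a then u else 0) + (if j = b then v else 0) := by
    intro j
    by_cases hja : j = a
    · rw [if_pos hja, if_pos hja, if_neg (fun hh => hab (hja.symm.trans hh)), add_zero]
    · rw [if_neg hja, if_neg hja, zero_add]
  rw [Finset.sum_congr rfl (fun j _ => h j), Finset.sum_add_distrib,
    Finset.sum_ite_eq' Finset.univ a (fun _ => u), Finset.sum_ite_eq' Finset.univ b (fun _ => v)]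
  simp

/-- the test vector `e₀ - e₁` -/
def svv (t : ℕ) (ht : 2 ≤ t) : Fin t → ℤ :=
  fun i => if i = ⟨0, by omega⟩ then 1 else if i = ⟨1, by omega⟩ then -1 else 0

lemma svv_eval {t : ℕ} (ht : 2 ≤ t) (j : Fin t) :
    svv t ht j = if (j : ℕ) = 0 then 1 else if (j : ℕ) = 1 then -1 else 0 := by
  unfold svv
  by_cases h0 : (j : ℕ) = 0
  · rw [if_pos (Fin.ext h0), if_pos h0]
  · rw [if_neg (fun hh => h0 (by rw [hh])), if_neg h0]
    by_cases h1 : (j : ℕ) = 1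
    · rw [if_pos (Fin.ext h1), if_pos h1]
    · rw [if_neg (fun hh => h1 (by rw [hh])), if_neg h1]

lemma svv_sum (t : ℕ) (ht : 2 ≤ t) : ∑ i, svv t ht i = 0 := by
  unfold svv
  rw [sum_pair_ite (⟨0, by omega⟩ : Fin t) ⟨1, by omega⟩
    (by intro h; simpa using congrArg Fin.val h) 1 (-1)]
  ring

lemma ff_svv (p t : ℕ) (ht : 2 ≤ t) : ff p t (svv t ht) = -1 := by
  unfold ff
  have hterm : ∀ j : Fin t, ((j : ℕ) : ZMod p) * ((svv t ht j : ℤ) : ZMod p)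
      = (if j = (⟨1, by omega⟩ : Fin t) then (-1 : ZMod p) else 0) := by
    intro j
    by_cases h1 : (j : ℕ) = 1
    · rw [if_pos (show j = (⟨1, by omega⟩ : Fin t) from Fin.ext h1), svv_eval,
        if_neg (show ¬ ((j : ℕ) = 0) from by omega), if_pos h1, h1]
      push_cast
      ring
    · rw [if_neg (show ¬ (j = (⟨1, by omega⟩ : Fin t)) from fun hh => h1 (by rw [hh])),
        svv_eval]
      by_cases h0 : (j : ℕ) = 0
      · rw [if_pos h0, h0]
        simp
      · rw [if_neg h0, if_neg h1]
        simp
  rw [Finset.sum_congr rfl (fun j _ => hterm j),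
    Finset.sum_ite_eq' Finset.univ _ (fun _ => (-1 : ZMod p))]
  simp

section Grp
variable {L : Type*} [Group L] (θ : L ≃* L) {t : ℕ} (ℓ x : L)

lemma theta_conj_zpow (hx : θ (ℓ * x * ℓ⁻¹) = x) (a : ℤ) :
    θ (ℓ * x ^ a * ℓ⁻¹) = x ^ a := by
  have h1 : ℓ * x ^ a * ℓ⁻¹ = (ℓ * x * ℓ⁻¹) ^ a := by
    have := map_zpow (MulAut.conj ℓ) x a
    simpa [MulAut.conj_apply] using this.symm
  rw [h1, map_zpow, hx]

lemma zpow_eq_zpow_of_dvd {a b : ℤ} (h : (orderOf x : ℤ) ∣ a - b) : x ^ a = x ^ b := by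
  have h1 : x ^ (a - b) = 1 := orderOf_dvd_iff_zpow_eq_one.1 h
  rw [zpow_sub] at h1
  exact mul_inv_eq_one.1 h1

lemma dvd_of_zpow_eq_zpow {a b : ℤ} (h : x ^ a = x ^ b) : (orderOf x : ℤ) ∣ a - b := by
  apply orderOf_dvd_iff_zpow_eq_one.2
  rw [zpow_sub, h, mul_inv_cancel]

/-- elements of the cyclic-twisted form -/
def thrY (t : ℕ) (ℓ x : L) (m : Fin t → ℤ) : Fin t → L :=
  fun i => if (i : ℕ) = t - 1 then ℓ * x ^ (m i) else x ^ (m i)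

lemma thrOp_thrY (ht : 2 ≤ t) (hx : θ (ℓ * x * ℓ⁻¹) = x) (m n : Fin t → ℤ) :
    thrOp θ t (thrY t ℓ x m) (thrY t ℓ x n) = thrY t ℓ x (opE m n) := by
  have hw : ∀ j : Fin t, thrY t ℓ x n j * (thrY t ℓ x m)⁻¹ j
      = if (j : ℕ) = t - 1 then ℓ * x ^ (n j - m j) * ℓ⁻¹ else x ^ (n j - m j) := by
    intro j
    simp only [Pi.inv_apply, thrY]
    by_cases h : (j : ℕ) = t - 1
    · rw [if_pos h, if_pos h, if_pos h, zpow_sub]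
      group
    · rw [if_neg h, if_neg h, if_neg h, zpow_sub]
  funext i
  have hit := i.2
  simp only [thrOp, Pi.mul_apply, thrU]
  by_cases h0 : (i : ℕ) = 0
  · rw [if_pos h0, hw ⟨t - 1, by omega⟩]
    have hne : ¬ ((i : ℕ) = t - 1) := by omega
    rw [if_pos (show ((⟨t - 1, by omega⟩ : Fin t) : ℕ) = t - 1 from rfl)]
    rw [theta_conj_zpow θ ℓ x hx]
    have hcp : cpred i = ⟨t - 1, by omega⟩ := by
      apply Fin.ext
      rw [cpred_coe, if_pos h0]
    simp only [thrY, opE, if_neg hne, hcp]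
    rw [← zpow_add]
  · rw [if_neg h0, hw ⟨(i : ℕ) - 1, by omega⟩]
    have hne1 : ¬ (((⟨(i : ℕ) - 1, by omega⟩ : Fin t) : ℕ) = t - 1) := by
      show ¬ ((i : ℕ) - 1 = t - 1)
      omega
    rw [if_neg hne1]
    have hcp : cpred i = ⟨(i : ℕ) - 1, by omega⟩ := by
      apply Fin.ext
      rw [cpred_coe, if_neg h0]
    simp only [thrY, opE, hcp]
    by_cases h : (i : ℕ) = t - 1
    · rw [if_pos h, if_pos h, mul_assoc, ← zpow_add]
    · rw [if_neg h, if_neg h, ← zpow_add]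

lemma thrY_mem (ht : 2 ≤ t) (m : Fin t → ℤ)
    (hsum : (orderOf x : ℤ) ∣ ∑ i, m i) : thrY t ℓ x m ∈ thrClass θ t ℓ := by
  classical
  have ht0 : 0 < t := by omega
  set f : ℕ → ℤ := fun j => m ⟨j % t, Nat.mod_lt _ ht0⟩ with hf
  set c : ℕ → ℤ := fun a => ∑ j ∈ Finset.range (a + 1), f j with hc
  have hfm : ∀ i : Fin t, f (i : ℕ) = m i := by
    intro i
    show m ⟨(i : ℕ) % t, _⟩ = m i
    exact congrArg m (Fin.ext (Nat.mod_eq_of_lt i.2))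
  have hstep : ∀ a : ℕ, c (a + 1) = c a + f (a + 1) := by
    intro a
    simp only [hc]
    exact Finset.sum_range_succ f (a + 1)
  have hkey : c (t - 2) + m ⟨t - 1, by omega⟩ = ∑ i, m i := by
    have h1 : ∑ j ∈ Finset.range t, f j = ∑ i, m i := by
      rw [← Fin.sum_univ_eq_sum_range f t]
      exact Finset.sum_congr rfl (fun i _ => hfm i)
    have h2 := Finset.sum_range_succ f (t - 1)
    rw [show t - 1 + 1 = t from by omega] at h2
    have h3 : c (t - 2) = ∑ j ∈ Finset.range (t - 1), f j := by
      simp only [hc]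
      rw [show t - 2 + 1 = t - 1 from by omega]
    have h4 : f (t - 1) = m ⟨t - 1, by omega⟩ := by
      have := hfm ⟨t - 1, by omega⟩
      simpa using this
    rw [h3, ← h4, ← h2, h1]
  refine ⟨fun i => if (i : ℕ) = t - 1 then 1 else x ^ c (i : ℕ), ?_⟩
  funext i
  have hit := i.2
  simp only [Pi.mul_apply, Pi.inv_apply, thrBase, thrU, thrY]
  by_cases h : (i : ℕ) = t - 1
  · have hne0 : ¬ ((i : ℕ) = 0) := by omega
    have hne1 : ¬ ((i : ℕ) - 1 = t - 1) := by omega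
    simp only [if_pos h, if_neg hne0, if_neg hne1]
    rw [show (i : ℕ) - 1 = t - 2 from by omega]
    have hxx : (x ^ c (t - 2))⁻¹ = x ^ m i := by
      rw [← zpow_neg]
      apply zpow_eq_zpow_of_dvd
      have hmi : m i = m ⟨t - 1, by omega⟩ := congrArg m (Fin.ext (by simpa using h))
      rw [hmi, show -(c (t - 2)) - m ⟨t - 1, by omega⟩
        = -(c (t - 2) + m ⟨t - 1, by omega⟩) from by ring, hkey]
      exact dvd_neg.mpr hsum
    rw [hxx]
    group
  · by_cases h0 : (i : ℕ) = 0
    · simp only [if_neg h, if_pos h0, if_true, map_one]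
      have hc0 : c (i : ℕ) = m i := by
        rw [h0]
        have hcc : c 0 = f 0 := by
          simp only [hc, zero_add, Finset.sum_range_one]
        rw [hcc, ← h0, hfm i]
      rw [hc0]
      group
    · have hne1 : ¬ ((i : ℕ) - 1 = t - 1) := by omega
      simp only [if_neg h, if_neg h0, if_neg hne1]
      obtain ⟨a, ha⟩ : ∃ a, (i : ℕ) = a + 1 := ⟨(i : ℕ) - 1, by omega⟩
      have hgoal : c (i : ℕ) = c ((i : ℕ) - 1) + m i := by
        rw [ha, Nat.add_sub_cancel, hstep a, ← ha, hfm i]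
      rw [hgoal, zpow_add]
      group

end Grp

lemma not_dvd_four {k : ℕ} (h1 : 2 ≤ k) (h2 : k ≠ 2) (h4 : k ≠ 4) : ¬ k ∣ 4 := by
  intro h
  have hle : k ≤ 4 := Nat.le_of_dvd (by norm_num) h
  interval_cases k <;> omega

lemma not_dvd_two {k : ℕ} (h : 2 < k) : ¬ k ∣ 2 := by
  intro hh
  have := Nat.le_of_dvd (by norm_num) hh
  omega

lemma not_dvd_one {k : ℕ} (h : 2 ≤ k) : ¬ k ∣ 1 := by
  intro hh
  have := Nat.le_of_dvd (by norm_num) hh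
  omega

end ThrAux

/-- Lemma 3.7: if there is `x ∈ L` with `θ(ℓxℓ⁻¹) = x`, `k = ord(x)`,
`gcd(k,t) ≠ 1`, `k ∉ {2,4}` when `t = 2`, and `k > 2` when `t = 4`,
then `C_ℓ` is of type D. -/
theorem thrClass_isTypeD_of_orderOf {L : Type*} [Group L] [Fintype L]
    (θ : L ≃* L) (t : ℕ) (ht : 2 ≤ t) (ℓ x : L)
    (hx : θ (ℓ * x * ℓ⁻¹) = x)
    (hgcd : Nat.gcd (orderOf x) t ≠ 1)
    (h2 : t = 2 → orderOf x ≠ 2 ∧ orderOf x ≠ 4)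
    (h4 : t = 4 → 2 < orderOf x) :
    IsTypeDOn (thrOp θ t) (thrClass θ t ℓ) := by
  classical
  obtain ⟨p, hp, hpg⟩ := Nat.exists_prime_and_dvd hgcd
  have hpk : p ∣ orderOf x := hpg.trans (Nat.gcd_dvd_left _ _)
  have hpt : p ∣ t := hpg.trans (Nat.gcd_dvd_right _ _)
  haveI : Fact (1 < p) := ⟨hp.one_lt⟩
  have hk0 : 0 < orderOf x := orderOf_pos x
  have hk2 : 2 ≤ orderOf x := le_trans hp.two_le (Nat.le_of_dvd hk0 hpk)
  refine ⟨{y | ∃ m : Fin t → ℤ, y = ThrAux.thrY t ℓ x m ∧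
      ((orderOf x : ℤ) ∣ ∑ i, m i) ∧ ThrAux.ff p t m = 0},
    {y | ∃ m : Fin t → ℤ, y = ThrAux.thrY t ℓ x m ∧
      ((orderOf x : ℤ) ∣ ∑ i, m i) ∧ ThrAux.ff p t m = -1},
    ?_, ?_, ?_, ?_, ?_, ?_, ?_, ?_⟩
  · rintro y ⟨m, rfl, hm, -⟩
    exact ThrAux.thrY_mem θ ℓ x ht m hm
  · rintro y ⟨m, rfl, hm, -⟩
    exact ThrAux.thrY_mem θ ℓ x ht m hm
  · constructor
    · exact ⟨_, 0, rfl, by simp, ThrAux.ff_zero p t⟩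
    · rintro a ⟨m, rfl, hm1, hm2⟩ b ⟨n, rfl, hn1, hn2⟩
      rw [ThrAux.thrOp_thrY θ ℓ x ht hx]
      exact ⟨_, rfl, by rw [ThrAux.sum_opE]; exact hn1,
        by rw [ThrAux.ff_opE hpt hpk m n hm1 hn1]; exact hn2⟩
  · constructor
    · exact ⟨_, ThrAux.svv t ht, rfl,
        by rw [ThrAux.svv_sum t ht]; exact dvd_zero _, ThrAux.ff_svv p t ht⟩
    · rintro a ⟨m, rfl, hm1, hm2⟩ b ⟨n, rfl, hn1, hn2⟩
      rw [ThrAux.thrOp_thrY θ ℓ x ht hx]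
      exact ⟨_, rfl, by rw [ThrAux.sum_opE]; exact hn1,
        by rw [ThrAux.ff_opE hpt hpk m n hm1 hn1]; exact hn2⟩
  · rw [Set.disjoint_left]
    rintro y ⟨m, rfl, hm1, hm2⟩ ⟨n, heq, hn1, hn2⟩
    have hdvd : ∀ i, (orderOf x : ℤ) ∣ m i - n i := by
      intro i
      have hco := congrFun heq i
      simp only [ThrAux.thrY] at hco
      by_cases h : (i : ℕ) = t - 1
      · rw [if_pos h, if_pos h] at hco
        exact ThrAux.dvd_of_zpow_eq_zpow x (mul_left_cancel hco)
      · rw [if_neg h, if_neg h] at hco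
        exact ThrAux.dvd_of_zpow_eq_zpow x hco
    have hcon := ThrAux.ff_congr hpk m n hdvd
    rw [hm2, hn2] at hcon
    exact one_ne_zero (neg_eq_zero.mp hcon.symm)
  · rintro r ⟨m, rfl, hm1, hm2⟩ s ⟨n, rfl, hn1, hn2⟩
    rw [ThrAux.thrOp_thrY θ ℓ x ht hx]
    exact ⟨_, rfl, by rw [ThrAux.sum_opE]; exact hn1,
      by rw [ThrAux.ff_opE hpt hpk m n hm1 hn1]; exact hn2⟩
  · rintro s ⟨m, rfl, hm1, hm2⟩ r ⟨n, rfl, hn1, hn2⟩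
    rw [ThrAux.thrOp_thrY θ ℓ x ht hx]
    exact ⟨_, rfl, by rw [ThrAux.sum_opE]; exact hn1,
      by rw [ThrAux.ff_opE hpt hpk m n hm1 hn1]; exact hn2⟩
  · refine ⟨ThrAux.thrY t ℓ x 0, ⟨0, rfl, by simp, ThrAux.ff_zero p t⟩,
      ThrAux.thrY t ℓ x (ThrAux.svv t ht),
      ⟨ThrAux.svv t ht, rfl, by rw [ThrAux.svv_sum t ht]; exact dvd_zero _,
        ThrAux.ff_svv p t ht⟩, ?_⟩
    rw [ThrAux.thrOp_thrY θ ℓ x ht hx, ThrAux.thrOp_thrY θ ℓ x ht hx,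
      ThrAux.thrOp_thrY θ ℓ x ht hx]
    intro heq
    have hco := congrFun heq (⟨0, by omega⟩ : Fin t)
    simp only [ThrAux.thrY] at hco
    have hne : ¬ (((⟨0, by omega⟩ : Fin t) : ℕ) = t - 1) := by
      show ¬ ((0 : ℕ) = t - 1)
      omega
    rw [if_neg hne, if_neg hne] at hco
    have hdvd := ThrAux.dvd_of_zpow_eq_zpow x hco
    simp only [ThrAux.opE, Pi.zero_apply, zero_add, sub_zero] at hdvd
    -- hdvd : ↑(orderOf x) ∣ svv c1 + (svv c3 - svv c2) - svv i0
    rcases (show t = 2 ∨ t = 3 ∨ t = 4 ∨ 5 ≤ t from by omega) with hT | hT | hT | hT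
    · subst hT
      obtain ⟨hA, hB⟩ := h2 rfl
      simp only [ThrAux.svv_eval] at hdvd
      norm_num [ThrAux.cpred_coe] at hdvd
      exact ThrAux.not_dvd_four hk2 hA hB (by
        have : ((orderOf x : ℤ)) ∣ ((4 : ℕ) : ℤ) := by
          norm_num
          exact hdvd
        exact_mod_cast this)
    · subst hT
      simp only [ThrAux.svv_eval] at hdvd
      norm_num [ThrAux.cpred_coe] at hdvd
      exact ThrAux.not_dvd_one hk2 (by
        have : ((orderOf x : ℤ)) ∣ ((1 : ℕ) : ℤ) := by
          norm_num
          exact hdvd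
        exact_mod_cast this)
    · subst hT
      simp only [ThrAux.svv_eval] at hdvd
      norm_num [ThrAux.cpred_coe] at hdvd
      exact ThrAux.not_dvd_two (h4 rfl) (by
        have : ((orderOf x : ℤ)) ∣ ((2 : ℕ) : ℤ) := by
          norm_num
          exact hdvd
        exact_mod_cast this)
    · simp only [ThrAux.svv_eval] at hdvd
      have e1 : ((ThrAux.cpred (⟨0, by omega⟩ : Fin t)) : ℕ) = t - 1 := by
        rw [ThrAux.cpred_coe]
        simp
      have e2 : ((ThrAux.cpred (ThrAux.cpred (⟨0, by omega⟩ : Fin t))) : ℕ) = t - 2 := by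
        rw [ThrAux.cpred_coe, e1, if_neg (by omega : ¬ (t - 1 = 0))]
        omega
      have e3 : ((ThrAux.cpred (ThrAux.cpred (ThrAux.cpred (⟨0, by omega⟩ : Fin t)))) : ℕ)
          = t - 3 := by
        rw [ThrAux.cpred_coe, e2, if_neg (by omega : ¬ (t - 2 = 0))]
        omega
      rw [e1, e2, e3] at hdvd
      rw [if_neg (by omega : ¬ (t - 1 = 0)), if_neg (by omega : ¬ (t - 1 = 1)),
        if_neg (by omega : ¬ (t - 2 = 0)), if_neg (by omega : ¬ (t - 2 = 1)),
        if_neg (by omega : ¬ (t - 3 = 0)), if_neg (by omega : ¬ (t - 3 = 1))] at hdvd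
      norm_num at hdvd
      exact ThrAux.not_dvd_one hk2 (by
        have : ((orderOf x : ℤ)) ∣ ((1 : ℕ) : ℤ) := by
          norm_num
          exact hdvd
        exact_mod_cast this)
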